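/- arXiv:1201.0057 — 3 statements merged into one kernel-verified Lean document; each statement's English description precedes it below -/
import Mathlib

section
/- Let f : ℝ → ℝ be twice differentiable with f''(u) < 0 for all u in the closed interval with endpoints u¹ ≠ u², let x¹ < x², and let g be the inverse of f' on that interval. Define the similarity interpolant U_P(x) = g( f'(u¹) + ((x − x¹)/(x² − x¹))·(f'(u²) − f'(u¹)) ) for x ∈ [x¹, x²]. Then ∫_{x¹}^{x²} U_P(x) dx = (x² − x¹) · ( (f'(u²)·u² − f(u²)) − (f'(u¹)·u¹ − f(u¹)) ) / ( f'(u²) − f'(u¹) ). -/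
open Set Topology Filter in
/-- The area under the similarity interpolant
`U_P(x) = g(f'(u1) + ((x-x1)/(x2-x1))·(f'(u2)-f'(u1)))` (with `g` the inverse of `f'` on
the interval between `u1` and `u2`, `f'' < 0` there) equals
`(x2-x1) · ([f'(u)u - f(u)]_{u1}^{u2}) / ([f'(u)]_{u1}^{u2})`. -/
theorem stmt_5 (f f' f'' g : ℝ → ℝ) (u1 u2 : ℝ) (hu : u1 ≠ u2) (x1 x2 : ℝ) (hx : x1 < x2)
    (hf : ∀ u ∈ Set.uIcc u1 u2, HasDerivWithinAt f (f' u) (Set.uIcc u1 u2) u)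
    (hf' : ∀ u ∈ Set.uIcc u1 u2, HasDerivWithinAt f' (f'' u) (Set.uIcc u1 u2) u)
    (hconc : ∀ u ∈ Set.uIcc u1 u2, f'' u < 0)
    (hg : ∀ u ∈ Set.uIcc u1 u2, g (f' u) = u) :
    ∫ x in x1..x2, g (f' u1 + ((x - x1) / (x2 - x1)) * (f' u2 - f' u1)) =
      (x2 - x1) * ((f' u2 * u2 - f u2) - (f' u1 * u1 - f u1)) / (f' u2 - f' u1) := by
  have hx0 : x2 - x1 ≠ 0 := sub_ne_zero.mpr hx.ne'
  have hu1K : u1 ∈ uIcc u1 u2 := left_mem_uIcc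
  have hu2K : u2 ∈ uIcc u1 u2 := right_mem_uIcc
  have hcontf' : ContinuousOn f' (uIcc u1 u2) := fun u hu => (hf' u hu).continuousWithinAt
  have hcontf : ContinuousOn f (uIcc u1 u2) := fun u hu => (hf u hu).continuousWithinAt
  -- f' is strictly antitone on the interval
  have hanti : StrictAntiOn f' (uIcc u1 u2) := by
    apply strictAntiOn_of_deriv_neg (convex_uIcc u1 u2) hcontf'
    intro y hy
    rw [Set.uIcc, interior_Icc] at hy
    have hyK : y ∈ uIcc u1 u2 := Ioo_subset_Icc_self hy
    have hnhds : uIcc u1 u2 ∈ 𝓝 y := by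
      rw [Set.uIcc]; exact Icc_mem_nhds hy.1 hy.2
    have := ((hf' y hyK).hasDerivAt hnhds).deriv
    rw [this]; exact hconc y hyK
  have hΔ : f' u2 - f' u1 ≠ 0 := by
    refine sub_ne_zero.mpr (fun h => hu ?_)
    exact (hanti.injOn hu2K hu1K h).symm
  -- image facts
  have himg : uIcc (f' u1) (f' u2) ⊆ f' '' (uIcc u1 u2) := intermediate_value_uIcc hcontf'
  have hLmem : ∀ x ∈ Icc x1 x2,
      f' u1 + ((x - x1) / (x2 - x1)) * (f' u2 - f' u1) ∈ uIcc (f' u1) (f' u2) := by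
    intro x hxm
    have ht : (x - x1) / (x2 - x1) ∈ Icc (0:ℝ) 1 := by
      constructor
      · exact div_nonneg (by linarith [hxm.1]) (by linarith)
      · rw [div_le_one (by linarith)]; linarith [hxm.2]
    have := (convex_uIcc (f' u1) (f' u2)).add_smul_sub_mem left_mem_uIcc right_mem_uIcc ht
    simpa [smul_eq_mul] using this
  -- properties of the interpolant ψ
  have hψ_spec : ∀ x ∈ Icc x1 x2,
      g (f' u1 + ((x - x1) / (x2 - x1)) * (f' u2 - f' u1)) ∈ uIcc u1 u2 ∧
      f' (g (f' u1 + ((x - x1) / (x2 - x1)) * (f' u2 - f' u1))) =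
        f' u1 + ((x - x1) / (x2 - x1)) * (f' u2 - f' u1) := by
    intro x hxm
    obtain ⟨u, huK, hfu⟩ := himg (hLmem x hxm)
    rw [← hfu, hg u huK]
    exact ⟨huK, hfu.symm ▸ rfl⟩
  -- continuity of g on the image of f'
  have hKcomp : IsCompact (uIcc u1 u2) := isCompact_uIcc
  haveI : CompactSpace (uIcc u1 u2) := isCompact_iff_compactSpace.mp hKcomp
  have hinj : Set.InjOn f' (uIcc u1 u2) := hanti.injOn
  have hbij : Function.Bijective (fun u : uIcc u1 u2 =>
      (⟨f' u, Set.mem_image_of_mem f' u.2⟩ : f' '' (uIcc u1 u2))) := by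
    constructor
    · intro a b hab
      exact Subtype.ext (hinj a.2 b.2 (congrArg Subtype.val hab))
    · rintro ⟨y, u, huK, rfl⟩
      exact ⟨⟨u, huK⟩, rfl⟩
  set e : uIcc u1 u2 ≃ f' '' (uIcc u1 u2) := Equiv.ofBijective _ hbij with he_def
  have hecont : Continuous e := by
    apply Continuous.subtype_mk
    exact hcontf'.restrict
  let h := hecont.homeoOfEquivCompactToT2
  have hgS : ContinuousOn g (f' '' (uIcc u1 u2)) := by
    rw [continuousOn_iff_continuous_restrict]
    have : (f' '' (uIcc u1 u2)).restrict g = Subtype.val ∘ h.symm := by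
      funext y
      obtain ⟨y, u, huK, rfl⟩ := y
      have h1 : h ⟨u, huK⟩ = ⟨f' u, Set.mem_image_of_mem f' huK⟩ := rfl
      have h2 : h.symm ⟨f' u, Set.mem_image_of_mem f' huK⟩ = ⟨u, huK⟩ := by
        rw [← h1, Homeomorph.symm_apply_apply]
      simp [Set.restrict, hg u huK, h2]
    change Continuous ((f' '' (uIcc u1 u2)).restrict g)
    rw [this]
    exact continuous_subtype_val.comp h.symm.continuous
  have hψcont : ContinuousOn
      (fun x => g (f' u1 + ((x - x1) / (x2 - x1)) * (f' u2 - f' u1))) (Icc x1 x2) := by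
    apply hgS.comp
    · fun_prop
    · intro x hxm
      exact himg (hLmem x hxm)
  set ψ : ℝ → ℝ := fun x => g (f' u1 + ((x - x1) / (x2 - x1)) * (f' u2 - f' u1)) with hψ_def
  have hψ1 : ψ x1 = u1 := by
    simp only [hψ_def, sub_self, zero_div, zero_mul, add_zero]
    exact hg u1 hu1K
  have hψ2 : ψ x2 = u2 := by
    simp only [hψ_def, div_self hx0, one_mul]
    rw [show f' u1 + (f' u2 - f' u1) = f' u2 by ring]
    exact hg u2 hu2K
  set c : ℝ := (x2 - x1) / (f' u2 - f' u1) with hc_def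
  set F : ℝ → ℝ := fun x => (c * f' u1 + x - x1) * ψ x - c * f (ψ x) with hF_def
  have hFd : ∀ x ∈ Ioo x1 x2, HasDerivAt F (ψ x) x := by
    intro x hx'
    have hxm : x ∈ Icc x1 x2 := Ioo_subset_Icc_self hx'
    obtain ⟨hψK0, hfψ0⟩ := hψ_spec x hxm
    have hψK : ψ x ∈ uIcc u1 u2 := hψK0
    have hfψ : f' (ψ x) = f' u1 + (x - x1) / (x2 - x1) * (f' u2 - f' u1) := hfψ0
    have ht0 : 0 < (x - x1) / (x2 - x1) := div_pos (by linarith [hx'.1]) (by linarith)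
    have ht1 : (x - x1) / (x2 - x1) < 1 := by
      rw [div_lt_one (by linarith)]; linarith [hx'.2]
    have htΔ : ((x - x1) / (x2 - x1)) * (f' u2 - f' u1) ≠ 0 := mul_ne_zero ht0.ne' hΔ
    have hne1 : ψ x ≠ u1 := by
      intro h
      apply htΔ
      have h3 := hfψ
      rw [h] at h3
      linarith [h3]
    have hne2 : ψ x ≠ u2 := by
      intro h
      have h2 : ((x - x1) / (x2 - x1) - 1) * (f' u2 - f' u1) ≠ 0 :=
        mul_ne_zero (sub_ne_zero.mpr ht1.ne) hΔ
      apply h2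
      have h3 := hfψ
      rw [h] at h3
      ring_nf
      ring_nf at h3
      linarith [h3]
    have hioo : ψ x ∈ Ioo (u1 ⊓ u2) (u1 ⊔ u2) := by
      have hmem : ψ x ∈ Icc (u1 ⊓ u2) (u1 ⊔ u2) := hψK
      constructor
      · refine lt_of_le_of_ne hmem.1 (Ne.symm ?_)
        rcases min_choice u1 u2 with h | h <;> rw [h] <;> [exact hne1; exact hne2]
      · refine lt_of_le_of_ne hmem.2 ?_
        rcases max_choice u1 u2 with h | h <;> rw [h] <;> [exact hne1; exact hne2]
    have hnhds : uIcc u1 u2 ∈ 𝓝 (ψ x) := by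
      rw [Set.uIcc]; exact Icc_mem_nhds hioo.1 hioo.2
    have hfd' : HasDerivAt f' (f'' (ψ x)) (ψ x) := (hf' _ hψK).hasDerivAt hnhds
    have hfd : HasDerivAt f (f' (ψ x)) (ψ x) := (hf _ hψK).hasDerivAt hnhds
    have hφd : HasDerivAt (fun u => x1 + (x2 - x1) * (f' u - f' u1) / (f' u2 - f' u1))
        ((x2 - x1) * f'' (ψ x) / (f' u2 - f' u1)) (ψ x) :=
      ((((hfd'.sub_const (f' u1)).const_mul (x2 - x1)).div_const _).const_add x1)
    have hDne : (x2 - x1) * f'' (ψ x) / (f' u2 - f' u1) ≠ 0 :=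
      div_ne_zero (mul_ne_zero hx0 (hconc _ hψK).ne) hΔ
    have hcψ : ContinuousAt ψ x := hψcont.continuousAt (Icc_mem_nhds hx'.1 hx'.2)
    have hev : ∀ᶠ y in 𝓝 x,
        (fun u => x1 + (x2 - x1) * (f' u - f' u1) / (f' u2 - f' u1)) (ψ y) = y := by
      filter_upwards [Ioo_mem_nhds hx'.1 hx'.2] with y hy
      have h2 : f' (ψ y) = f' u1 + (y - x1) / (x2 - x1) * (f' u2 - f' u1) :=
        (hψ_spec y (Ioo_subset_Icc_self hy)).2
      show x1 + (x2 - x1) * (f' (ψ y) - f' u1) / (f' u2 - f' u1) = y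
      rw [h2]
      field_simp
      ring
    have hψd : HasDerivAt ψ (((x2 - x1) * f'' (ψ x) / (f' u2 - f' u1))⁻¹) x :=
      HasDerivAt.of_local_left_inverse hcψ hφd hDne hev
    have h1 : HasDerivAt (fun y => (c * f' u1 + y - x1) * ψ y)
        (1 * ψ x + (c * f' u1 + x - x1) * ((x2 - x1) * f'' (ψ x) / (f' u2 - f' u1))⁻¹) x :=
      ((((hasDerivAt_id x).const_add (c * f' u1)).sub_const x1)).mul hψd
    have h2 : HasDerivAt (fun y => c * f (ψ y))
        (c * (f' (ψ x) * ((x2 - x1) * f'' (ψ x) / (f' u2 - f' u1))⁻¹)) x :=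
      (hfd.comp x hψd).const_mul c
    have := h1.sub h2
    refine this.congr_deriv ?_
    symm
    rw [hfψ, hc_def]
    have hD : ((x2 - x1) * f'' (ψ x) / (f' u2 - f' u1))⁻¹ =
        (f' u2 - f' u1) / ((x2 - x1) * f'' (ψ x)) := by
      rw [inv_div]
    rw [hD]
    have hf''ne : f'' (ψ x) ≠ 0 := (hconc _ hψK).ne
    field_simp
    ring
  have hFcont : ContinuousOn F (Icc x1 x2) := by
    apply ContinuousOn.sub
    · exact (Continuous.continuousOn (by fun_prop)).mul hψcont
    · exact continuousOn_const.mul (hcontf.comp hψcont (fun x hxm => (hψ_spec x hxm).1))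
  have hint : IntervalIntegrable ψ MeasureTheory.volume x1 x2 := by
    apply ContinuousOn.intervalIntegrable
    rwa [uIcc_of_le hx.le]
  have key := intervalIntegral.integral_eq_sub_of_hasDerivAt_of_le hx.le hFcont hFd hint
  rw [show (∫ x in x1..x2, g (f' u1 + ((x - x1) / (x2 - x1)) * (f' u2 - f' u1))) =
      ∫ x in x1..x2, ψ x from rfl, key, hF_def]
  simp only [hψ1, hψ2, sub_self, zero_sub]
  rw [hc_def]
  field_simp
  ring
end

section
/- Let f : ℝ → ℝ be twice continuously differentiable with f''(s) < 0 for all s in the closed interval with endpoints u ≠ v. Then f'(u) ≠ f'(v), and the nonlinear average a(u, v) = ((f'(v)·v − f(v)) − (f'(u)·u − f(u)))/(f'(v) − f'(u)) satisfies min(u, v) < a(u, v) < max(u, v). -/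
lemma stmt_7_aux (f f' f'' : ℝ → ℝ) (u v : ℝ) (huv : u < v)
    (hf : ∀ s ∈ Set.Icc u v, HasDerivWithinAt f (f' s) (Set.Icc u v) s)
    (hf' : ∀ s ∈ Set.Icc u v, HasDerivWithinAt f' (f'' s) (Set.Icc u v) s)
    (hconc : ∀ s ∈ Set.Icc u v, f'' s < 0) :
    f' v < f' u ∧
    u < ((f' v * v - f v) - (f' u * u - f u)) / (f' v - f' u) ∧
    ((f' v * v - f v) - (f' u * u - f u)) / (f' v - f' u) < v := by
  have cont : ContinuousOn f (Set.Icc u v) := fun s hs => (hf s hs).continuousWithinAt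
  have cont' : ContinuousOn f' (Set.Icc u v) := fun s hs => (hf' s hs).continuousWithinAt
  have hderiv : ∀ x ∈ Set.Ioo u v, HasDerivAt f (f' x) x := by
    intro x hx
    exact (hf x (Set.Ioo_subset_Icc_self hx)).hasDerivAt (Icc_mem_nhds hx.1 hx.2)
  have hanti : StrictAntiOn f' (Set.Icc u v) := by
    apply strictAntiOn_of_deriv_neg (convex_Icc u v) cont'
    intro x hx
    rw [interior_Icc] at hx
    have h := (hf' x (Set.Ioo_subset_Icc_self hx)).hasDerivAt (Icc_mem_nhds hx.1 hx.2)
    rw [h.deriv]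
    exact hconc x (Set.Ioo_subset_Icc_self hx)
  have huv' : f' v < f' u := hanti (Set.left_mem_Icc.2 huv.le) (Set.right_mem_Icc.2 huv.le) huv
  obtain ⟨c, hc, hcs⟩ := exists_hasDerivAt_eq_slope f f' huv cont hderiv
  have hcu : f' c < f' u := hanti (Set.left_mem_Icc.2 huv.le) (Set.Ioo_subset_Icc_self hc) hc.1
  have hvc : f' v < f' c := hanti (Set.Ioo_subset_Icc_self hc) (Set.right_mem_Icc.2 huv.le) hc.2
  have hslope : f v - f u = f' c * (v - u) := by
    rw [hcs]
    exact (div_mul_cancel₀ _ (sub_ne_zero.2 huv.ne')).symm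
  have hd : f' v - f' u < 0 := by linarith
  refine ⟨huv', ?_, ?_⟩
  · rw [lt_div_iff_of_neg hd]
    nlinarith [hvc, huv.le]
  · rw [div_lt_iff_of_neg hd]
    nlinarith [hcu, huv.le]

/-- For a flux `f` twice continuously differentiable with `f'' < 0` on the
closed interval with endpoints `u ≠ v`, one has `f'(u) ≠ f'(v)` and the nonlinear average
`a(u,v) = ((f'(v)v - f(v)) - (f'(u)u - f(u)))/(f'(v) - f'(u))` lies strictly between
`min u v` and `max u v`. -/
theorem stmt_7 (f f' f'' : ℝ → ℝ) (u v : ℝ) (huv : u ≠ v)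
    (hf : ∀ s ∈ Set.uIcc u v, HasDerivWithinAt f (f' s) (Set.uIcc u v) s)
    (hf' : ∀ s ∈ Set.uIcc u v, HasDerivWithinAt f' (f'' s) (Set.uIcc u v) s)
    (hf''c : ContinuousOn f'' (Set.uIcc u v))
    (hconc : ∀ s ∈ Set.uIcc u v, f'' s < 0) :
    f' u ≠ f' v ∧
    min u v < ((f' v * v - f v) - (f' u * u - f u)) / (f' v - f' u) ∧
    ((f' v * v - f v) - (f' u * u - f u)) / (f' v - f' u) < max u v := by
  rcases lt_or_gt_of_ne huv with h | h
  · rw [Set.uIcc_of_le h.le] at hf hf' hconc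
    obtain ⟨h1, h2, h3⟩ := stmt_7_aux f f' f'' u v h hf hf' hconc
    exact ⟨h1.ne', by rwa [min_eq_left h.le], by rwa [max_eq_right h.le]⟩
  · rw [Set.uIcc_of_ge h.le] at hf hf' hconc
    obtain ⟨h1, h2, h3⟩ := stmt_7_aux f f' f'' v u h hf hf' hconc
    have heq : ((f' v * v - f v) - (f' u * u - f u)) / (f' v - f' u)
        = ((f' u * u - f u) - (f' v * v - f v)) / (f' u - f' v) := by
      rw [← neg_div_neg_eq]; ring_nf
    exact ⟨h1.ne, by rw [min_eq_right h.le, heq]; exact h2,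
      by rw [max_eq_left h.le, heq]; exact h3⟩
end

section
/- Let f₁, f₂ : ℝ → ℝ be continuously differentiable, and let u₁, u₂ : ℝ × ℝ → ℝ be continuously differentiable solutions of ∂uₖ/∂t + ∂(fₖ(uₖ))/∂x = 0 (k = 1, 2) on open sets containing the relevant regions. Let c₁, c₂ be constants with f₁(c₁) = f₂(c₂), let X₁(t) = L₁ + f₁'(c₁)·t with u₁(X₁(t), t) = c₁ for all t ∈ [0, T], and X₂(t) = f₂'(c₂)·t with u₂(X₂(t), t) = c₂ for all t ∈ [0, T]. Assume the coupling condition f₁(u₁(L₁, t)) = f₂(u₂(0, t)) for all t ∈ [0, T]. Define I₁(t) = ∫_{L₁}^{X₁(t)} u₁(x, t) dx and I₂(t) = ∫_0^{X₂(t)} u₂(x, t) dx. Then for all t ∈ [0, T], I₂(t) − I₁(t) = (c₂·f₂'(c₂) − c₁·f₁'(c₁))·t. -/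
open intervalIntegral MeasureTheory Set Metric Asymptotics

namespace Stmt14Aux

lemma hasDerivAt_time {u : ℝ × ℝ → ℝ} (hu : ContDiff ℝ 1 u) (x t : ℝ) :
    HasDerivAt (fun s => u (x, s)) (fderiv ℝ u (x, t) (0, 1)) t := by
  have hc : HasDerivAt (fun s : ℝ => ((x, s) : ℝ × ℝ)) ((0 : ℝ), (1 : ℝ)) t := by
    simpa using ((hasDerivAt_const t x).prodMk (hasDerivAt_id t))
  exact (hu.differentiable one_ne_zero (x, t)).hasFDerivAt.comp_hasDerivAt t hc

lemma hasDerivAt_space {u : ℝ × ℝ → ℝ} (hu : ContDiff ℝ 1 u) (x t : ℝ) :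
    HasDerivAt (fun y => u (y, t)) (fderiv ℝ u (x, t) (1, 0)) x := by
  have hc : HasDerivAt (fun y : ℝ => ((y, t) : ℝ × ℝ)) ((1 : ℝ), (0 : ℝ)) x := by
    simpa using ((hasDerivAt_id x).prodMk (hasDerivAt_const x t))
  exact (hu.differentiable one_ne_zero (x, t)).hasFDerivAt.comp_hasDerivAt x hc

lemma cont_ut {u : ℝ × ℝ → ℝ} (hu : ContDiff ℝ 1 u) :
    Continuous fun p : ℝ × ℝ => fderiv ℝ u p (0, 1) :=
  (hu.continuous_fderiv one_ne_zero).clm_apply continuous_const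

lemma cont_slice {u : ℝ × ℝ → ℝ} (hu : ContDiff ℝ 1 u) (t : ℝ) :
    Continuous fun x => u (x, t) :=
  hu.continuous.comp (continuous_id.prodMk continuous_const)

lemma partA {u : ℝ × ℝ → ℝ} (hu : ContDiff ℝ 1 u) (b v t₀ : ℝ) :
    HasDerivAt (fun t => ∫ x in b..(b + v * (t - t₀)), u (x, t)) (v * u (b, t₀)) t₀ := by
  rw [hasDerivAt_iff_isLittleO]
  simp only [sub_self, mul_zero, add_zero, integral_same, sub_zero]
  rw [isLittleO_iff]
  intro c hc
  have hvpos : (0 : ℝ) < |v| + 1 := by positivity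
  have hε : (0 : ℝ) < c / (|v| + 1) := by positivity
  obtain ⟨δ, hδ, hδ'⟩ := Metric.continuousAt_iff.mp hu.continuous.continuousAt _ hε
  have hev : ∀ᶠ t in nhds t₀, |t - t₀| < δ / (|v| + 1) := by
    have : Ioo (t₀ - δ / (|v| + 1)) (t₀ + δ / (|v| + 1)) ∈ nhds t₀ :=
      Ioo_mem_nhds (by linarith [div_pos hδ hvpos]) (by linarith [div_pos hδ hvpos])
    filter_upwards [this] with t ht
    rw [abs_sub_lt_iff]; constructor <;> [linarith [ht.2]; linarith [ht.1]]
  filter_upwards [hev] with t ht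
  have hkey : ∀ x ∈ uIoc b (b + v * (t - t₀)),
      ‖u (x, t) - u (b, t₀)‖ ≤ c / (|v| + 1) := by
    intro x hx
    have hx' : |x - b| ≤ |v * (t - t₀)| := by
      have := Set.abs_sub_left_of_mem_uIcc (uIoc_subset_uIcc hx)
      simpa using this
    have hd : dist (x, t) (b, t₀) < δ := by
      rw [Prod.dist_eq]
      refine max_lt ?_ ?_
      · rw [Real.dist_eq]
        calc |x - b| ≤ |v| * |t - t₀| := by rwa [abs_mul] at hx'
          _ < |v| * (δ / (|v| + 1)) + δ / (|v| + 1) := by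
              nlinarith [abs_nonneg v, abs_nonneg (t - t₀), div_pos hδ hvpos]
          _ = δ := by field_simp
      · rw [Real.dist_eq]
        calc |t - t₀| < δ / (|v| + 1) := ht
          _ ≤ δ := by
            rw [div_le_iff₀ hvpos]
            nlinarith [abs_nonneg v, hδ]
    exact le_of_lt (hδ' hd)
  have hconst : (t - t₀) * (v * u (b, t₀)) = ∫ _x in b..(b + v * (t - t₀)), u (b, t₀) := by
    rw [intervalIntegral.integral_const]
    ring_nf
  rw [smul_eq_mul, hconst]
  have hint1 : IntervalIntegrable (fun x => u (x, t)) volume b (b + v * (t - t₀)) :=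
    (cont_slice hu t).intervalIntegrable _ _
  have hint2 : IntervalIntegrable (fun _x : ℝ => u (b, t₀)) volume b (b + v * (t - t₀)) :=
    intervalIntegrable_const
  rw [← intervalIntegral.integral_sub hint1 hint2]
  calc ‖∫ x in b..(b + v * (t - t₀)), (u (x, t) - u (b, t₀))‖
      ≤ c / (|v| + 1) * |b + v * (t - t₀) - b| :=
        intervalIntegral.norm_integral_le_of_norm_le_const hkey
    _ ≤ c * ‖t - t₀‖ := by
        rw [show b + v * (t - t₀) - b = v * (t - t₀) by ring, abs_mul, Real.norm_eq_abs]
        rw [div_mul_eq_mul_div, mul_comm (|v|) (|t - t₀|), ← mul_assoc, div_le_iff₀ hvpos]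
        nlinarith [abs_nonneg v, abs_nonneg (t - t₀), hc.le]

lemma partB {u : ℝ × ℝ → ℝ} (hu : ContDiff ℝ 1 u) (a b t₀ : ℝ) :
    HasDerivAt (fun t => ∫ x in a..b, u (x, t))
      (∫ x in a..b, fderiv ℝ u (x, t₀) (0, 1)) t₀ := by
  have hcont : Continuous fun p : ℝ × ℝ => u p := hu.continuous
  set K : Set (ℝ × ℝ) := uIcc a b ×ˢ Icc (t₀ - 1) (t₀ + 1) with hK
  have hKc : IsCompact K := isCompact_uIcc.prod isCompact_Icc
  obtain ⟨M, hM⟩ := hKc.exists_bound_of_continuousOn (cont_ut hu).continuousOn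
  have h := intervalIntegral.hasDerivAt_integral_of_dominated_loc_of_deriv_le
    (F := fun t x => u (x, t)) (F' := fun t x => fderiv ℝ u (x, t) (0, 1))
    (x₀ := t₀) (bound := fun _ => M) (a := a) (b := b) (μ := volume)
    (Metric.ball_mem_nhds t₀ one_pos)
    (Filter.Eventually.of_forall fun t =>
      ((hcont.comp (continuous_id.prodMk continuous_const)).aestronglyMeasurable))
    ((hcont.comp (continuous_id.prodMk continuous_const)).intervalIntegrable _ _)
    (((cont_ut hu).comp (continuous_id.prodMk continuous_const)).aestronglyMeasurable)
    ?_ intervalIntegrable_const ?_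
  · exact h.2
  · refine Filter.Eventually.of_forall fun x hx t ht => ?_
    refine hM (x, t) ⟨uIoc_subset_uIcc hx, ?_⟩
    have := mem_ball_iff_norm.mp ht
    rw [Real.norm_eq_abs, abs_sub_lt_iff] at this
    exact ⟨by linarith [this.2], by linarith [this.1]⟩
  · exact Filter.Eventually.of_forall fun x _ t _ => hasDerivAt_time hu x t

lemma key {u : ℝ × ℝ → ℝ} (hu : ContDiff ℝ 1 u) (a v t₀ : ℝ) :
    HasDerivAt (fun t => ∫ x in a..(a + v * t), u (x, t))
      (v * u (a + v * t₀, t₀) + ∫ x in a..(a + v * t₀), fderiv ℝ u (x, t₀) (0, 1)) t₀ := by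
  set b := a + v * t₀ with hb
  have hsum : HasDerivAt
      (fun t => (∫ x in a..b, u (x, t)) + ∫ x in b..(b + v * (t - t₀)), u (x, t))
      ((∫ x in a..b, fderiv ℝ u (x, t₀) (0, 1)) + v * u (b, t₀)) t₀ :=
    (partB hu a b t₀).add (partA hu b v t₀)
  have heq : (fun t => ∫ x in a..(a + v * t), u (x, t)) =ᶠ[nhds t₀]
      fun t => (∫ x in a..b, u (x, t)) + ∫ x in b..(b + v * (t - t₀)), u (x, t) := by
    refine Filter.Eventually.of_forall fun t => ?_
    beta_reduce
    have h1 : IntervalIntegrable (fun x => u (x, t)) volume a b :=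
      (cont_slice hu t).intervalIntegrable _ _
    have h2 : IntervalIntegrable (fun x => u (x, t)) volume b (b + v * (t - t₀)) :=
      (cont_slice hu t).intervalIntegrable _ _
    rw [intervalIntegral.integral_add_adjacent_intervals h1 h2]
    congr 1
    rw [hb]; ring
  have h2 := hsum.congr_of_eventuallyEq heq
  rw [add_comm (v * u (b, t₀))]
  exact h2

lemma deriv_I (f f' : ℝ → ℝ) (hf : ∀ y, HasDerivAt f (f' y) y) (hf'c : Continuous f')
    {u : ℝ × ℝ → ℝ} (hu : ContDiff ℝ 1 u) (a v c t₀ : ℝ)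
    (Ω : Set (ℝ × ℝ))
    (hreg : ∀ x ∈ Set.uIcc a (a + v * t₀), (x, t₀) ∈ Ω)
    (hpde : ∀ p ∈ Ω, deriv (fun s => u (p.1, s)) p.2 + deriv (fun y => f (u (y, p.2))) p.1 = 0)
    (hXc : u (a + v * t₀, t₀) = c) :
    HasDerivAt (fun t => ∫ x in a..(a + v * t), u (x, t))
      (v * c - f c + f (u (a, t₀))) t₀ := by
  have hmain := key hu a v t₀
  set b := a + v * t₀ with hb
  have hint : (∫ x in a..b, fderiv ℝ u (x, t₀) (0, 1)) = -(f (u (b, t₀)) - f (u (a, t₀))) := by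
    have hEq : EqOn (fun x => fderiv ℝ u (x, t₀) (0, 1))
        (fun x => -(f' (u (x, t₀)) * fderiv ℝ u (x, t₀) (1, 0))) (uIcc a b) := by
      intro x hx
      have hp := hpde (x, t₀) (hreg x hx)
      simp only at hp
      have h1 : deriv (fun s => u (x, s)) t₀ = fderiv ℝ u (x, t₀) (0, 1) :=
        (hasDerivAt_time hu x t₀).deriv
      have h2 : deriv (fun y => f (u (y, t₀))) x = f' (u (x, t₀)) * fderiv ℝ u (x, t₀) (1, 0) :=
        ((hf (u (x, t₀))).comp x (hasDerivAt_space hu x t₀)).deriv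
      simp only [h1, h2] at hp
      dsimp only
      linarith [hp]
    rw [intervalIntegral.integral_congr hEq]
    have hftc : (∫ x in a..b, f' (u (x, t₀)) * fderiv ℝ u (x, t₀) (1, 0)) =
        f (u (b, t₀)) - f (u (a, t₀)) := by
      have := intervalIntegral.integral_eq_sub_of_hasDerivAt
        (f := fun x => f (u (x, t₀)))
        (f' := fun x => f' (u (x, t₀)) * fderiv ℝ u (x, t₀) (1, 0)) (a := a) (b := b)
        (fun x _ => (hf (u (x, t₀))).comp x (hasDerivAt_space hu x t₀))
        (Continuous.intervalIntegrable ((hf'c.comp (cont_slice hu t₀)).mul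
          (((hu.continuous_fderiv one_ne_zero).clm_apply continuous_const).comp
            (continuous_id.prodMk continuous_const))) _ _)
      simpa using this
    rw [intervalIntegral.integral_neg, hftc]
  rw [hint, hXc] at hmain
  convert hmain using 1
  ring

end Stmt14Aux

open Stmt14Aux in
/-- At a bottleneck node joining an ingoing edge (ending at `L1`, flux `f1`)
to an outgoing edge (starting at `0`, flux `f2`), with `C¹` solutions `u1, u2` of the
respective conservation laws, extremal particles of constant values `c1, c2` with matched
fluxes `f1(c1) = f2(c2)` moving characteristically from the node, and the coupling
condition `f1(u1(L1,t)) = f2(u2(0,t))`, the excess area `I1` and virtual area `I2`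
satisfy `I2(t) - I1(t) = (c2·f2'(c2) - c1·f1'(c1))·t` on `[0,T]`. -/
theorem stmt_14 (f1 f1' f2 f2' : ℝ → ℝ)
    (hf1 : ∀ y, HasDerivAt f1 (f1' y) y) (hf1c : Continuous f1')
    (hf2 : ∀ y, HasDerivAt f2 (f2' y) y) (hf2c : Continuous f2')
    (u1 u2 : ℝ × ℝ → ℝ) (hu1 : ContDiff ℝ 1 u1) (hu2 : ContDiff ℝ 1 u2)
    (L1 c1 c2 T : ℝ) (hT : 0 < T) (hflux : f1 c1 = f2 c2)
    (Ω1 Ω2 : Set (ℝ × ℝ)) (hΩ1 : IsOpen Ω1) (hΩ2 : IsOpen Ω2)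
    (hreg1 : ∀ t ∈ Set.Icc (0:ℝ) T, ∀ x ∈ Set.uIcc L1 (L1 + f1' c1 * t), (x, t) ∈ Ω1)
    (hreg2 : ∀ t ∈ Set.Icc (0:ℝ) T, ∀ x ∈ Set.uIcc (0:ℝ) (f2' c2 * t), (x, t) ∈ Ω2)
    (hpde1 : ∀ p ∈ Ω1,
      deriv (fun s => u1 (p.1, s)) p.2 + deriv (fun y => f1 (u1 (y, p.2))) p.1 = 0)
    (hpde2 : ∀ p ∈ Ω2,
      deriv (fun s => u2 (p.1, s)) p.2 + deriv (fun y => f2 (u2 (y, p.2))) p.1 = 0)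
    (hX1 : ∀ t ∈ Set.Icc (0:ℝ) T, u1 (L1 + f1' c1 * t, t) = c1)
    (hX2 : ∀ t ∈ Set.Icc (0:ℝ) T, u2 (f2' c2 * t, t) = c2)
    (hcouple : ∀ t ∈ Set.Icc (0:ℝ) T, f1 (u1 (L1, t)) = f2 (u2 (0, t))) :
    ∀ t ∈ Set.Icc (0:ℝ) T,
      (∫ x in (0:ℝ)..(f2' c2 * t), u2 (x, t)) -
        (∫ x in L1..(L1 + f1' c1 * t), u1 (x, t)) =
      (c2 * f2' c2 - c1 * f1' c1) * t := by
  intro t ht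
  set G : ℝ → ℝ := fun s =>
    (∫ x in (0:ℝ)..(f2' c2 * s), u2 (x, s)) -
      (∫ x in L1..(L1 + f1' c1 * s), u1 (x, s)) -
    (c2 * f2' c2 - c1 * f1' c1) * s with hGdef
  have hG : ∀ s ∈ Set.Icc (0:ℝ) T, HasDerivAt G 0 s := by
    intro s hs
    have h1 := deriv_I f1 f1' hf1 hf1c hu1 L1 (f1' c1) c1 s Ω1 (hreg1 s hs) hpde1 (hX1 s hs)
    have h2 := deriv_I f2 f2' hf2 hf2c hu2 0 (f2' c2) c2 s Ω2
      (by simpa using hreg2 s hs) hpde2 (by simpa using hX2 s hs)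
    simp only [zero_add] at h2
    have hC : HasDerivAt (fun s : ℝ => (c2 * f2' c2 - c1 * f1' c1) * s)
        (c2 * f2' c2 - c1 * f1' c1) s := by
      simpa using (hasDerivAt_id s).const_mul (c2 * f2' c2 - c1 * f1' c1)
    have h := (h2.sub h1).sub hC
    have hval : f2' c2 * c2 - f2 c2 + f2 (u2 (0, s)) -
        (f1' c1 * c1 - f1 c1 + f1 (u1 (L1, s))) - (c2 * f2' c2 - c1 * f1' c1) = 0 := by
      have hc := hcouple s hs
      linarith [hflux, hc]
    rw [hval] at h
    exact h
  have hsub : Set.Icc (0:ℝ) t ⊆ Set.Icc (0:ℝ) T := Set.Icc_subset_Icc le_rfl ht.2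
  have hcont : ContinuousOn G (Set.Icc 0 t) := fun s hs =>
    (hG s (hsub hs)).continuousAt.continuousWithinAt
  have hder : ∀ s ∈ Set.Ico (0:ℝ) t, HasDerivWithinAt G 0 (Set.Ici s) s := fun s hs =>
    (hG s ⟨hs.1, hs.2.le.trans ht.2⟩).hasDerivWithinAt
  have hGt := constant_of_has_deriv_right_zero hcont hder t (Set.right_mem_Icc.mpr ht.1)
  have hG0 : G 0 = 0 := by simp [hGdef]
  rw [hG0] at hGt
  simp only [hGdef] at hGt
  linarith [hGt]
end
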